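/- Let X be an L_{∞,λ}-space, let Y be a subspace of X*, and assume there is θ > 0 such that θ‖x‖ ≤ sup{|y*(x)| : y* ∈ Y, ‖y*‖ ≤ 1} for all x ∈ X. Then for every finite-dimensional subspace F of X and every ε > 0 there exists a finite-rank bounded linear operator T : X → X such that: (i) ‖Tx − x‖ ≤ ε‖x‖ for all x ∈ F; (ii) ‖T‖ ≤ λ/θ; (iii) the adjoint satisfies T*[X*] ⊆ Y. In particular, if X is separable, then there exists a sequence of finite-rank operators T_n : X → X with T_n x → x for all x ∈ X and T_n*[X*] ⊆ Y for all n. -/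

import Mathlib

open Filter Topology

set_option maxHeartbeats 1000000
set_option synthInstance.maxHeartbeats 200000

noncomputable section

/-- A Banach space `X` is an `L_{∞,λ}`-space if every finite dimensional subspace is contained
in a finite dimensional subspace `G` which is `λ`-isomorphic to `ℓ∞^{dim G}`. -/
def IsLinftyCSpace (X : Type*) [NormedAddCommGroup X] [NormedSpace ℝ X] (C : ℝ) : Prop :=
  ∀ F : Submodule ℝ X, FiniteDimensional ℝ ↥F →
    ∃ G : Submodule ℝ X, F ≤ G ∧ FiniteDimensional ℝ ↥G ∧
      ∃ T : ↥G ≃L[ℝ] (Fin (Module.finrank ℝ ↥G) → ℝ),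
        ‖(T : ↥G →L[ℝ] (Fin (Module.finrank ℝ ↥G) → ℝ))‖ *
          ‖(T.symm : (Fin (Module.finrank ℝ ↥G) → ℝ) →L[ℝ] ↥G)‖ ≤ C

lemma helly {X : Type*} [NormedAddCommGroup X] [NormedSpace ℝ X]
    (Y : Submodule ℝ (X →L[ℝ] ℝ)) (θ : ℝ) (hθ : 0 < θ)
    (hnorming : ∀ x : X, θ * ‖x‖ ≤ ⨆ y : {y : X →L[ℝ] ℝ // y ∈ Y ∧ ‖y‖ ≤ 1}, |y.1 x|)
    {m : ℕ} (x : Fin m → X) (f : X →L[ℝ] ℝ) (c : ℝ) (hc : 0 < c) (hf : ‖f‖ ≤ c)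
    (δ : ℝ) (hδ : 0 < δ) :
    ∃ g ∈ Y, ‖g‖ ≤ c / θ ∧ ∀ k, |g (x k) - f (x k)| ≤ δ := by
  classical
  set L : (X →L[ℝ] ℝ) → (Fin m → ℝ) := fun y => fun k => y (x k) with hL
  have hLlin : IsLinearMap ℝ L := by
    constructor
    · intro a b; funext k; simp [hL]
    · intro r a; funext k; simp [hL]
  set s : Set (Fin m → ℝ) := L '' (↑Y ∩ Metric.closedBall 0 (c / θ)) with hs
  have hsconv : Convex ℝ s :=
    ((Y.convex).inter (convex_closedBall 0 (c / θ))).is_linear_image hLlin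
  have hpos : 0 < c / θ := div_pos hc hθ
  have hmem : L f ∈ closure s := by
    by_contra hcon
    obtain ⟨ℓ, u, hlt, hgt⟩ :=
      geometric_hahn_banach_closed_point (hsconv.closure) isClosed_closure hcon
    set z : X := ∑ k, ℓ (Pi.single k 1) • x k with hz
    have key : ∀ y : X →L[ℝ] ℝ, ℓ (L y) = y z := by
      intro y
      have h1 : (L y) = ∑ k, Pi.single k (y (x k)) := by
        rw [Finset.univ_sum_single]
      have h2 : ∀ k, (Pi.single k (y (x k)) : Fin m → ℝ)
          = (y (x k)) • (Pi.single k 1 : Fin m → ℝ) := by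
        intro k; funext j; simp [Pi.single_apply, mul_comm]
      rw [h1, map_sum]
      simp_rw [h2, map_smul, smul_eq_mul]
      rw [hz, map_sum]
      simp only [map_smul, smul_eq_mul]
      exact Finset.sum_congr rfl fun k _ => mul_comm _ _
    have hu0 : 0 < u := by
      have h0 : (0 : Fin m → ℝ) ∈ s := by
        refine ⟨0, ⟨Y.zero_mem, by simp [hpos.le]⟩, ?_⟩
        funext k; simp [hL]
      have := hlt 0 (subset_closure h0)
      simpa using this
    have hbound : ∀ y : X →L[ℝ] ℝ, y ∈ Y → ‖y‖ ≤ 1 → |y z| ≤ u * θ / c := by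
      intro y hy hy1
      have harg : ∀ w : X →L[ℝ] ℝ, w ∈ Y → ‖w‖ ≤ 1 → (c / θ) * w z < u := by
        intro w hw hw1
        have hmem' : L ((c / θ) • w) ∈ s := by
          refine ⟨(c / θ) • w, ⟨Y.smul_mem _ hw, ?_⟩, rfl⟩
          simp only [Metric.mem_closedBall, dist_zero_right, norm_smul]
          calc ‖(c/θ)‖ * ‖w‖ ≤ ‖(c/θ)‖ * 1 :=
                mul_le_mul_of_nonneg_left hw1 (norm_nonneg _)
            _ = c / θ := by rw [mul_one, Real.norm_eq_abs, abs_of_pos hpos]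
        have := hlt _ (subset_closure hmem')
        rwa [key, ContinuousLinearMap.smul_apply, smul_eq_mul] at this
      have h1 := harg y hy hy1
      have h2 := harg (-y) (Y.neg_mem hy) (by simpa using hy1)
      rw [ContinuousLinearMap.neg_apply, mul_neg] at h2
      have habs : (c / θ) * |y z| < u := by
        rw [← abs_of_pos hpos, ← abs_mul]
        exact abs_lt.2 ⟨by linarith, h1⟩
      have : |y z| < u / (c / θ) := (lt_div_iff₀' hpos).2 habs
      rw [div_div_eq_mul_div] at this
      exact this.le
    have hne : Nonempty {y : X →L[ℝ] ℝ // y ∈ Y ∧ ‖y‖ ≤ 1} :=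
      ⟨⟨0, Y.zero_mem, by simp⟩⟩
    have hzn : θ * ‖z‖ ≤ θ * (u / c) := by
      refine (hnorming z).trans ?_
      refine ciSup_le fun y => ?_
      calc |y.1 z| ≤ u * θ / c := hbound y.1 y.2.1 y.2.2
        _ = θ * (u / c) := by ring
    have hzn' : ‖z‖ ≤ u / c := le_of_mul_le_mul_left hzn hθ
    have hle : f z ≤ u := by
      calc f z ≤ |f z| := le_abs_self _
        _ ≤ ‖f‖ * ‖z‖ := f.le_opNorm z
        _ ≤ c * (u / c) := mul_le_mul hf hzn' (norm_nonneg _) hc.le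
        _ = u := by field_simp
    exact lt_irrefl (f z) (lt_of_le_of_lt hle (by rwa [key] at hgt))
  rw [Metric.mem_closure_iff] at hmem
  obtain ⟨a, ⟨g, ⟨hgY, hgball⟩, rfl⟩, hdist⟩ := hmem δ hδ
  refine ⟨g, hgY, by simpa [Metric.mem_closedBall, dist_zero_right] using hgball, fun k => ?_⟩
  have h2 : dist (L f k) (L g k) < δ := lt_of_le_of_lt (dist_le_pi_dist (L f) (L g) k) hdist
  rw [Real.dist_eq] at h2
  simpa [hL, abs_sub_comm] using h2.le

lemma part1_aux {X : Type*} [NormedAddCommGroup X] [NormedSpace ℝ X]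
    (lam : ℝ) (hlam : 1 ≤ lam)
    (Y : Submodule ℝ (X →L[ℝ] ℝ)) (θ : ℝ) (hθ : 0 < θ)
    (hnorming : ∀ x : X, θ * ‖x‖ ≤ ⨆ y : {y : X →L[ℝ] ℝ // y ∈ Y ∧ ‖y‖ ≤ 1}, |y.1 x|)
    (F : Submodule ℝ X) (hFfin : FiniteDimensional ℝ ↥F) (ε : ℝ) (hε : 0 < ε)
    (hFbot : F ≠ ⊥)
    (G : Submodule ℝ X) (hFG : F ≤ G) {n : ℕ} (T₀ : ↥G ≃L[ℝ] (Fin n → ℝ))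
    (hT₀ : ‖(T₀ : ↥G →L[ℝ] (Fin n → ℝ))‖ *
      ‖(T₀.symm : (Fin n → ℝ) →L[ℝ] ↥G)‖ ≤ lam) :
    ∃ T : X →L[ℝ] X, FiniteDimensional ℝ ↥(LinearMap.range (T : X →ₗ[ℝ] X)) ∧
      (∀ x ∈ F, ‖T x - x‖ ≤ ε * ‖x‖) ∧
      ‖T‖ ≤ lam / θ ∧
      (∀ f : X →L[ℝ] ℝ, f.comp T ∈ Y) := by
  classical
  have hlam0 : (0:ℝ) < lam := lt_of_lt_of_le one_pos hlam
  set A := ‖(T₀ : ↥G →L[ℝ] (Fin n → ℝ))‖ with hA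
  set B := ‖(T₀.symm : (Fin n → ℝ) →L[ℝ] ↥G)‖ with hB
  obtain ⟨x₀, hx₀F, hx₀⟩ := (Submodule.ne_bot_iff F).1 hFbot
  have hGnt : Nontrivial ↥G := ⟨⟨x₀, hFG hx₀F⟩, 0, by simp [Subtype.ext_iff, hx₀]⟩
  have hPnt : Nontrivial (Fin n → ℝ) := (T₀.toEquiv.symm).nontrivial
  have hnpos : 0 < n := by
    rcases Nat.eq_zero_or_pos n with h | h
    · exfalso
      subst h
      obtain ⟨a, b, hab⟩ := hPnt
      exact hab (Subsingleton.elim a b)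
    · exact h
  have hone : 1 ≤ A * B := by
    set v : Fin n → ℝ := Pi.single ⟨0, hnpos⟩ 1 with hv
    have hv0 : v ≠ 0 := by
      intro h
      have := congrFun h ⟨0, hnpos⟩
      simp [hv] at this
    have hvpos : 0 < ‖v‖ := norm_pos_iff.2 hv0
    have h1 : ‖v‖ ≤ A * B * ‖v‖ := by
      have e1 : (T₀ : ↥G →L[ℝ] (Fin n → ℝ)) (T₀.symm v) = v := by simp
      calc ‖v‖ = ‖(T₀ : ↥G →L[ℝ] (Fin n → ℝ)) (T₀.symm v)‖ := by rw [e1]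
        _ ≤ A * ‖(T₀.symm : (Fin n → ℝ) →L[ℝ] ↥G) v‖ :=
            (T₀ : ↥G →L[ℝ] (Fin n → ℝ)).le_opNorm _
        _ ≤ A * (B * ‖v‖) :=
            mul_le_mul_of_nonneg_left
              ((T₀.symm : (Fin n → ℝ) →L[ℝ] ↥G).le_opNorm v)
              (ContinuousLinearMap.opNorm_nonneg _)
        _ = A * B * ‖v‖ := by ring
    nlinarith
  have hApos : 0 < A := by
    rcases lt_or_ge 0 A with h | h
    · exact h
    · exfalso; nlinarith [norm_nonneg (T₀.symm : (Fin n → ℝ) →L[ℝ] ↥G)]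
  have hBpos : 0 < B := by
    rcases lt_or_ge 0 B with h | h
    · exact h
    · exfalso; nlinarith
  set e : Fin n → ↥G := fun i => T₀.symm (Pi.single i 1) with he
  have vec_eq : ∀ v : Fin n → ℝ, T₀.symm v = ∑ i, v i • e i := by
    intro v
    have h1 : v = ∑ i, Pi.single i (v i) := (Finset.univ_sum_single v).symm
    have h2 : ∀ i, (Pi.single i (v i) : Fin n → ℝ) = v i • (Pi.single i 1 : Fin n → ℝ) := by
      intro i; funext j; simp [Pi.single_apply, mul_comm]
    conv_lhs => rw [h1]
    rw [map_sum]
    exact Finset.sum_congr rfl fun i _ => by rw [h2, map_smul]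
  set φ : Fin n → (↥G →L[ℝ] ℝ) :=
    fun i => (ContinuousLinearMap.proj i).comp (T₀ : ↥G →L[ℝ] (Fin n → ℝ)) with hφ
  have hφnorm : ∀ i, ‖φ i‖ ≤ A := by
    intro i
    refine ContinuousLinearMap.opNorm_le_bound _ hApos.le fun x => ?_
    calc ‖(φ i) x‖ = ‖((T₀ : ↥G →L[ℝ] (Fin n → ℝ)) x) i‖ := rfl
      _ ≤ ‖(T₀ : ↥G →L[ℝ] (Fin n → ℝ)) x‖ := norm_le_pi_norm _ i
      _ ≤ A * ‖x‖ := (T₀ : ↥G →L[ℝ] (Fin n → ℝ)).le_opNorm x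
  choose fex hfex hfexnorm using fun i => exists_extension_norm_eq G (φ i)
  set d := Module.finrank ℝ ↥F with hd
  set b := Module.finBasis ℝ ↥F with hb
  set xs : Fin d → X := fun j => (b j : X) with hxs
  set cf : Fin d → (↥F →L[ℝ] ℝ) := fun j => LinearMap.toContinuousLinearMap (b.coord j) with hcf
  set M : ℝ := ∑ j, ‖cf j‖ with hM
  have hM0 : 0 ≤ M := Finset.sum_nonneg fun j _ => ContinuousLinearMap.opNorm_nonneg _
  have hMb : ∀ x : ↥F, ∑ j, |b.coord j x| ≤ M * ‖x‖ := by
    intro x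
    rw [hM, Finset.sum_mul]
    refine Finset.sum_le_sum fun j _ => ?_
    have h : |b.coord j x| = ‖(cf j) x‖ := rfl
    rw [h]
    exact (cf j).le_opNorm x
  set δ := ε / (B * M + 1) with hδ
  have hδpos : 0 < δ := div_pos hε (by positivity)
  have hδkey : B * (M * δ) ≤ ε := by
    rw [hδ]
    have h2 : (B*M)/(B*M+1) ≤ 1 := by
      rw [div_le_one (by positivity)]; linarith
    calc B * (M * (ε / (B * M + 1))) = (B*M)/(B*M+1) * ε := by ring
      _ ≤ 1 * ε := mul_le_mul_of_nonneg_right h2 hε.le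
      _ = ε := one_mul ε
  have hfexA : ∀ i, ‖fex i‖ ≤ A := fun i => (hfexnorm i).le.trans (hφnorm i)
  choose g hgY hgnorm hgapprox using fun i =>
    helly Y θ hθ hnorming xs (fex i) A hApos (hfexA i) δ hδpos
  set S : X →L[ℝ] X := ∑ i, (g i).smulRight ((e i : X)) with hS
  have hSapp : ∀ x : X, S x = ∑ i, g i x • ((e i : X)) := by
    intro x; simp [hS, ContinuousLinearMap.sum_apply]
  have hSvec : ∀ x : X, S x = ((T₀.symm (fun i => g i x) : ↥G) : X) := by
    intro x
    rw [hSapp, vec_eq]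
    push_cast
    rfl
  refine ⟨S, ?_, ?_, ?_, ?_⟩
  · -- finite rank
    have hle : LinearMap.range (S : X →ₗ[ℝ] X) ≤
        Submodule.span ℝ (Set.range (fun i => ((e i : X)))) := by
      rintro _ ⟨x, rfl⟩
      rw [ContinuousLinearMap.coe_coe, hSapp]
      exact Submodule.sum_mem _ fun i _ =>
        Submodule.smul_mem _ _ (Submodule.subset_span ⟨i, rfl⟩)
    have : FiniteDimensional ℝ ↥(Submodule.span ℝ (Set.range (fun i => ((e i : X))))) :=
      FiniteDimensional.span_of_finite ℝ (Set.finite_range _)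
    exact Submodule.finiteDimensional_of_le hle
  · -- approximation on F
    intro x hx
    set xF : ↥F := ⟨x, hx⟩ with hxF
    have hxrepr : x = ∑ j, b.coord j xF • xs j := by
      have h1 := b.sum_repr xF
      have h2 : ((∑ j, b.repr xF j • b j : ↥F) : X) = x := by rw [h1]
      rw [← h2]
      push_cast
      rfl
    have hcoef : ∀ i, |g i x - fex i x| ≤ δ * (M * ‖x‖) := by
      intro i
      have hgf : g i x - fex i x = ∑ j, b.coord j xF * (g i (xs j) - fex i (xs j)) := by
        conv_lhs => rw [hxrepr]
        rw [map_sum, map_sum, ← Finset.sum_sub_distrib]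
        refine Finset.sum_congr rfl fun j _ => ?_
        rw [map_smul, map_smul]
        simp [smul_eq_mul, mul_sub]
      rw [hgf]
      calc |∑ j, b.coord j xF * (g i (xs j) - fex i (xs j))|
          ≤ ∑ j, |b.coord j xF * (g i (xs j) - fex i (xs j))| := Finset.abs_sum_le_sum_abs _ _
        _ ≤ ∑ j, |b.coord j xF| * δ := by
            refine Finset.sum_le_sum fun j _ => ?_
            rw [abs_mul]
            exact mul_le_mul_of_nonneg_left (hgapprox i j) (abs_nonneg _)
        _ = (∑ j, |b.coord j xF|) * δ := by rw [Finset.sum_mul]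
        _ ≤ (M * ‖xF‖) * δ := mul_le_mul_of_nonneg_right (hMb xF) hδpos.le
        _ = δ * (M * ‖x‖) := by
            have h : ‖xF‖ = ‖x‖ := rfl
            rw [h]; ring
    have hfexG : ∀ i, fex i x = ((T₀ ⟨x, hFG hx⟩ : Fin n → ℝ)) i := by
      intro i
      have := hfex i ⟨x, hFG hx⟩
      rw [this]
      rfl
    have hid : ∑ i, fex i x • ((e i : X)) = x := by
      have h1 : (T₀.symm (fun i => fex i x) : ↥G) = ⟨x, hFG hx⟩ := by
        have h : (fun i => fex i x) = T₀ ⟨x, hFG hx⟩ := funext hfexG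
        rw [h]
        simp
      have h2 := vec_eq (fun i => fex i x)
      rw [h1] at h2
      have h3 : ((∑ i, fex i x • e i : ↥G) : X) = x := by rw [← h2]
      have h4 : ((∑ i, fex i x • e i : ↥G) : X) = ∑ i, fex i x • ((e i : X)) := by
        push_cast; rfl
      rw [← h4]
      exact h3
    have hdiff : S x - x = ((T₀.symm (fun i => g i x - fex i x) : ↥G) : X) := by
      calc S x - x = (∑ i, g i x • ((e i : X))) - ∑ i, fex i x • ((e i : X)) := by
            rw [hid, hSapp]
        _ = ∑ i, (g i x - fex i x) • ((e i : X)) := by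
            rw [← Finset.sum_sub_distrib]
            exact Finset.sum_congr rfl fun i _ => (sub_smul _ _ _).symm
        _ = ((T₀.symm (fun i => g i x - fex i x) : ↥G) : X) := by
            rw [vec_eq]; push_cast; rfl
    rw [hdiff]
    have hnormw : ‖(fun i => g i x - fex i x : Fin n → ℝ)‖ ≤ δ * (M * ‖x‖) := by
      refine (pi_norm_le_iff_of_nonneg (by positivity)).2 fun i => ?_
      exact hcoef i
    calc ‖((T₀.symm (fun i => g i x - fex i x) : ↥G) : X)‖
        = ‖(T₀.symm : (Fin n → ℝ) →L[ℝ] ↥G) (fun i => g i x - fex i x)‖ := rfl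
      _ ≤ B * ‖(fun i => g i x - fex i x : Fin n → ℝ)‖ :=
          (T₀.symm : (Fin n → ℝ) →L[ℝ] ↥G).le_opNorm _
      _ ≤ B * (δ * (M * ‖x‖)) := mul_le_mul_of_nonneg_left hnormw hBpos.le
      _ = (B * (M * δ)) * ‖x‖ := by ring
      _ ≤ ε * ‖x‖ := mul_le_mul_of_nonneg_right hδkey (norm_nonneg _)
  · -- norm bound
    refine ContinuousLinearMap.opNorm_le_bound _ (by positivity) fun x => ?_
    have hnormw : ‖(fun i => g i x : Fin n → ℝ)‖ ≤ A / θ * ‖x‖ := by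
      refine (pi_norm_le_iff_of_nonneg (by positivity)).2 fun i => ?_
      calc ‖g i x‖ ≤ ‖g i‖ * ‖x‖ := (g i).le_opNorm x
        _ ≤ A / θ * ‖x‖ := mul_le_mul_of_nonneg_right (hgnorm i) (norm_nonneg _)
    calc ‖S x‖ = ‖(T₀.symm : (Fin n → ℝ) →L[ℝ] ↥G) (fun i => g i x)‖ := by rw [hSvec]; rfl
      _ ≤ B * ‖(fun i => g i x : Fin n → ℝ)‖ :=
          (T₀.symm : (Fin n → ℝ) →L[ℝ] ↥G).le_opNorm _
      _ ≤ B * (A / θ * ‖x‖) := mul_le_mul_of_nonneg_left hnormw hBpos.le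
      _ = (A * B) / θ * ‖x‖ := by ring
      _ ≤ lam / θ * ‖x‖ := by gcongr
  · -- adjoint
    intro f
    have h : f.comp S = ∑ i, f ((e i : X)) • g i := by
      ext x
      simp [hSapp, ContinuousLinearMap.sum_apply, mul_comm]
    rw [h]
    exact Submodule.sum_mem _ fun i _ => Y.smul_mem _ (hgY i)

lemma part1 {X : Type*} [NormedAddCommGroup X] [NormedSpace ℝ X]
    (lam : ℝ) (hlam : 1 ≤ lam) (hX : IsLinftyCSpace X lam)
    (Y : Submodule ℝ (X →L[ℝ] ℝ)) (θ : ℝ) (hθ : 0 < θ)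
    (hnorming : ∀ x : X, θ * ‖x‖ ≤ ⨆ y : {y : X →L[ℝ] ℝ // y ∈ Y ∧ ‖y‖ ≤ 1}, |y.1 x|)
    (F : Submodule ℝ X) (hFfin : FiniteDimensional ℝ ↥F) (ε : ℝ) (hε : 0 < ε) :
    ∃ T : X →L[ℝ] X, FiniteDimensional ℝ ↥(LinearMap.range (T : X →ₗ[ℝ] X)) ∧
      (∀ x ∈ F, ‖T x - x‖ ≤ ε * ‖x‖) ∧
      ‖T‖ ≤ lam / θ ∧
      (∀ f : X →L[ℝ] ℝ, f.comp T ∈ Y) := by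
  have hlam0 : (0:ℝ) < lam := lt_of_lt_of_le one_pos hlam
  by_cases hFbot : F = ⊥
  · refine ⟨0, ?_, ?_, ?_, ?_⟩
    · have hle : LinearMap.range ((0 : X →L[ℝ] X) : X →ₗ[ℝ] X) ≤ (⊥ : Submodule ℝ X) := by
        rintro _ ⟨x, rfl⟩; simp
      exact Submodule.finiteDimensional_of_le hle
    · intro x hx
      rw [hFbot, Submodule.mem_bot] at hx
      simp [hx]
    · simp only [norm_zero]
      positivity
    · intro f; simp [Y.zero_mem]
  · obtain ⟨G, hFG, hGfin, T₀, hT₀⟩ := hX F hFfin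
    exact part1_aux lam hlam Y θ hθ hnorming F hFfin ε hε hFbot G hFG T₀ hT₀

/-- Let `X` be an `L_{∞,λ}`-space and `Y` a subspace of `X^*` norming `X` up
to a constant `θ > 0`.  Then for every finite dimensional `F ⊆ X` and `ε > 0` there is a finite
rank operator `T : X → X` with `‖Tx - x‖ ≤ ε‖x‖` on `F`, `‖T‖ ≤ λ/θ` and `T^*[X^*] ⊆ Y`.
In particular, if `X` is separable there is a sequence of finite rank operators `T_n` with
`T_n x → x` for all `x` and `T_n^*[X^*] ⊆ Y` for all `n`. -/
theorem statement12 {X : Type*} [NormedAddCommGroup X] [NormedSpace ℝ X] [CompleteSpace X]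
    (lam : ℝ) (hlam : 1 ≤ lam) (hX : IsLinftyCSpace X lam)
    (Y : Submodule ℝ (X →L[ℝ] ℝ)) (θ : ℝ) (hθ : 0 < θ)
    (hnorming : ∀ x : X, θ * ‖x‖ ≤ ⨆ y : {y : X →L[ℝ] ℝ // y ∈ Y ∧ ‖y‖ ≤ 1}, |y.1 x|) :
    (∀ F : Submodule ℝ X, FiniteDimensional ℝ ↥F → ∀ ε : ℝ, 0 < ε →
      ∃ T : X →L[ℝ] X, FiniteDimensional ℝ ↥(LinearMap.range (T : X →ₗ[ℝ] X)) ∧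
        (∀ x ∈ F, ‖T x - x‖ ≤ ε * ‖x‖) ∧
        ‖T‖ ≤ lam / θ ∧
        (∀ f : X →L[ℝ] ℝ, f.comp T ∈ Y)) ∧
    (TopologicalSpace.SeparableSpace X →
      ∃ T : ℕ → (X →L[ℝ] X),
        (∀ n, FiniteDimensional ℝ ↥(LinearMap.range (T n : X →ₗ[ℝ] X))) ∧
        (∀ x : X, Tendsto (fun n => T n x) atTop (nhds x)) ∧
        (∀ n (f : X →L[ℝ] ℝ), f.comp (T n) ∈ Y)) := by

  have hlam0 : (0:ℝ) < lam := lt_of_lt_of_le one_pos hlam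
  refine ⟨fun F hF ε hε => part1 lam hlam hX Y θ hθ hnorming F hF ε hε, ?_⟩
  intro hsep
  have : Nonempty X := ⟨0⟩
  obtain ⟨u, hu⟩ := TopologicalSpace.exists_dense_seq X
  have hFfin : ∀ m : ℕ, FiniteDimensional ℝ ↥(Submodule.span ℝ (u '' Set.Iic m)) :=
    fun m => FiniteDimensional.span_of_finite ℝ ((Set.finite_Iic m).image u)
  choose T hT1 hT2 hT3 hT4 using fun m : ℕ =>
    part1 lam hlam hX Y θ hθ hnorming (Submodule.span ℝ (u '' Set.Iic m)) (hFfin m)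
      ((m + 1 : ℝ))⁻¹ (by positivity)
  refine ⟨T, hT1, ?_, hT4⟩
  intro x
  rw [Metric.tendsto_atTop]
  intro η hη
  set K := lam / θ + 1 with hK
  have hKpos : (0:ℝ) < K := by positivity
  have hK1 : (1:ℝ) ≤ K := by
    rw [hK]
    have : 0 ≤ lam / θ := by positivity
    linarith
  obtain ⟨k, hk⟩ := hu.exists_dist_lt x (show 0 < η / (3 * K) by positivity)
  obtain ⟨N, hN⟩ := exists_nat_gt (‖u k‖ / (η / 3))
  refine ⟨max k N, fun m hm => ?_⟩
  have hkm : k ≤ m := le_trans (le_max_left _ _) hm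
  have hNm : N ≤ m := le_trans (le_max_right _ _) hm
  have huk : u k ∈ Submodule.span ℝ (u '' Set.Iic m) :=
    Submodule.subset_span ⟨k, hkm, rfl⟩
  have h1 : ‖T m x - T m (u k)‖ ≤ η / 3 := by
    have e1 : T m x - T m (u k) = T m (x - u k) := by rw [map_sub]
    rw [e1]
    calc ‖T m (x - u k)‖ ≤ ‖T m‖ * ‖x - u k‖ := (T m).le_opNorm _
      _ ≤ (lam / θ) * ‖x - u k‖ := mul_le_mul_of_nonneg_right (hT3 m) (norm_nonneg _)
      _ ≤ K * (η / (3 * K)) := by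
          refine mul_le_mul (by rw [hK]; linarith) ?_ (norm_nonneg _) hKpos.le
          have : ‖x - u k‖ = dist x (u k) := by rw [dist_eq_norm]
          rw [this]
          exact hk.le
      _ = η / 3 := by field_simp
  have h2 : ‖T m (u k) - u k‖ ≤ η / 3 := by
    have := hT2 m (u k) huk
    have hm1 : ((m:ℝ) + 1)⁻¹ * ‖u k‖ ≤ η / 3 := by
      have hN1 : ‖u k‖ < (η / 3) * ((N:ℝ) + 1) := by
        rw [div_lt_iff₀ (by positivity)] at hN
        nlinarith [hη, norm_nonneg (u k)]
      have hmN : ((m:ℝ) + 1)⁻¹ ≤ ((N:ℝ) + 1)⁻¹ := by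
        apply inv_anti₀ (by positivity)
        have : (N:ℝ) ≤ m := Nat.cast_le.2 hNm
        linarith
      calc ((m:ℝ) + 1)⁻¹ * ‖u k‖ ≤ ((N:ℝ) + 1)⁻¹ * ‖u k‖ :=
            mul_le_mul_of_nonneg_right hmN (norm_nonneg _)
        _ ≤ η / 3 := by
            rw [inv_mul_le_iff₀ (by positivity)]
            nlinarith [norm_nonneg (u k)]
    exact this.trans hm1
  have h3 : ‖u k - x‖ < η / 3 := by
    have he : ‖u k - x‖ = dist x (u k) := by rw [dist_eq_norm, norm_sub_rev]
    rw [he]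
    have hle : η / (3 * K) ≤ η / 3 := by
      apply div_le_div_of_nonneg_left hη.le (by norm_num) ?_
      linarith
    exact lt_of_lt_of_le hk hle
  have htri : ‖T m x - x‖ ≤ ‖T m x - T m (u k)‖ + ‖T m (u k) - u k‖ + ‖u k - x‖ := by
    calc ‖T m x - x‖ = ‖(T m x - T m (u k)) + (T m (u k) - u k) + (u k - x)‖ := by
          congr 1
          abel
      _ ≤ ‖T m x - T m (u k)‖ + ‖T m (u k) - u k‖ + ‖u k - x‖ := by
          refine (norm_add_le _ _).trans ?_
          gcongr
          exact norm_add_le _ _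
  rw [dist_eq_norm]
  linarith
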